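/- (Interpolated Hardy inequality) There is a universal constant C>0 such that for every δ with 0<δ<1 and every smooth compactly supported function f:ℝ³→ℝ: ‖ |x|^{-δ} f ‖_{L²(ℝ³)} ≤ C ‖∇f‖_{L²(ℝ³)}^{δ} ‖f‖_{L²(ℝ³)}^{1−δ}. -/

import Mathlib

open MeasureTheory Real

noncomputable section

/-- Spacetime points: index `0` is time, indices `1,2,3` are space. -/
abbrev Pt : Type := Fin 4 → ℝ

/-- Spatial points in ℝ³. -/
abbrev Sp : Type := Fin 3 → ℝ

/-- Build a spacetime point from a time and a spatial point. -/
def pt (t : ℝ) (x : Sp) : Pt := Fin.cons t x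

/-- Partial derivative ∂_i (i = 0 is ∂_t). -/
def pd (i : Fin 4) (u : Pt → ℝ) : Pt → ℝ := fun p => fderiv ℝ u p (Pi.single i 1)

/-- Euclidean norm of a spatial point. -/
def rnorm (x : Sp) : ℝ := Real.sqrt (∑ a, (x a) ^ 2)

/-- Japanese bracket ⟨s⟩ = √(1+s²). -/
def jb (s : ℝ) : ℝ := Real.sqrt (1 + s ^ 2)

/-- Wave operator ∂_t² − Δ. -/
def box (u : Pt → ℝ) : Pt → ℝ := fun p =>
  pd 0 (pd 0 u) p - (pd 1 (pd 1 u) p + pd 2 (pd 2 u) p + pd 3 (pd 3 u) p)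

/-- Rotation Ω_{ab} = x_a ∂_b − x_b ∂_a. -/
def Omg (a b : Fin 4) (u : Pt → ℝ) : Pt → ℝ := fun p => p a * pd b u p - p b * pd a u p

/-- Lorentz boost L_a = x_a ∂_t + t ∂_a. -/
def Lb (a : Fin 4) (u : Pt → ℝ) : Pt → ℝ := fun p => p a * pd 0 u p + p 0 * pd a u p

/-- Scaling vector field S = t ∂_t + Σ x_a ∂_a. -/
def Sc (u : Pt → ℝ) : Pt → ℝ := fun p => ∑ i, p i * pd i u p

/-- The ten-field family V = {∂_α, Ω_{ab}, L_a}. -/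
def VZ : Fin 10 → (Pt → ℝ) → Pt → ℝ :=
  ![pd 0, pd 1, pd 2, pd 3, Omg 1 2, Omg 1 3, Omg 2 3, Lb 1, Lb 2, Lb 3]

/-- The eleven-field family Γ = V ∪ {S}. -/
def GZ : Fin 11 → (Pt → ℝ) → Pt → ℝ :=
  ![pd 0, pd 1, pd 2, pd 3, Omg 1 2, Omg 1 3, Omg 2 3, Lb 1, Lb 2, Lb 3, Sc]

/-- Composition Z^I of fields from V. -/
def compV (I : List (Fin 10)) (u : Pt → ℝ) : Pt → ℝ := I.foldr (fun i f => VZ i f) u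

/-- Composition Γ^I of fields from V ∪ {S}. -/
def compG (I : List (Fin 11)) (u : Pt → ℝ) : Pt → ℝ := I.foldr (fun i f => GZ i f) u

/-- Null form Q₀(u,v) = −∂_t u ∂_t v + Σ_a ∂_a u ∂_a v. -/
def Q0 (u v : Pt → ℝ) : Pt → ℝ := fun p =>
  -(pd 0 u p * pd 0 v p) + ∑ a : Fin 3, pd a.succ u p * pd a.succ v p

/-- Null form Q_{αβ}(u,v) = ∂_α u ∂_β v − ∂_β u ∂_α v. -/
def Qab (α β : Fin 4) (u v : Pt → ℝ) : Pt → ℝ := fun p =>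
  pd α u p * pd β v p - pd β u p * pd α v p

/-- Good derivative G_a = (x_a/r) ∂_t + ∂_a. -/
def Ga (a : Fin 3) (u : Pt → ℝ) : Pt → ℝ := fun p =>
  (p a.succ / Real.sqrt ((p 1) ^ 2 + (p 2) ^ 2 + (p 3) ^ 2)) * pd 0 u p + pd a.succ u p

/-- L² norm of a function on ℝ³. -/
def L2norm (g : Sp → ℝ) : ℝ := (∫ x : Sp, (g x) ^ 2) ^ (1/2 : ℝ)

/-- Spatial partial derivative on ℝ³. -/
def pd3 (a : Fin 3) (f : Sp → ℝ) : Sp → ℝ := fun x => fderiv ℝ f x (Pi.single a 1)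

/-- Composition ∇^I of spatial partial derivatives. -/
def compD (I : List (Fin 3)) (f : Sp → ℝ) : Sp → ℝ := I.foldr (fun a g => pd3 a g) f

/-- Euclidean norm of the spatial gradient. -/
def gradNorm (f : Sp → ℝ) (x : Sp) : ℝ := Real.sqrt (∑ a, (pd3 a f x) ^ 2)

open Set Metric
open scoped ENNReal

/-- 1D Hardy per ray. -/
lemma ray_hardy (G : ℝ → ℝ) (hG : ContDiff ℝ 1 G) (R : ℝ)
    (hsupp : ∀ r : ℝ, R ≤ |r| → G r = 0) :
    ∫⁻ r in Ioi (0:ℝ), ENNReal.ofReal (G r ^ 2) ≤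
      4 * ∫⁻ r in Ioi (0:ℝ), ENNReal.ofReal (r ^ 2 * deriv G r ^ 2) := by
  set R₀ : ℝ := max R 1 with hR₀def
  have hR₀ : (0:ℝ) < R₀ := lt_of_lt_of_le one_pos (le_max_right _ _)
  have hsupp₀ : ∀ r : ℝ, R₀ ≤ |r| → G r = 0 := fun r hr =>
    hsupp r (le_trans (le_max_left _ _) hr)
  have hGd : Differentiable ℝ G := hG.differentiable one_ne_zero
  have hG' : Continuous (deriv G) := hG.continuous_deriv le_rfl
  have hGc : Continuous G := hG.continuous
  have hd0 : ∀ r : ℝ, R₀ < |r| → deriv G r = 0 := by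
    intro r hr
    have hop : IsOpen {s : ℝ | R₀ < |s|} := isOpen_lt continuous_const continuous_abs
    have hev : G =ᶠ[nhds r] (fun _ => (0:ℝ)) := by
      filter_upwards [hop.mem_nhds hr] with s hs
      exact hsupp₀ s (le_of_lt hs)
    rw [Filter.EventuallyEq.deriv_eq hev]
    simp
  have hcs : ∀ h : ℝ → ℝ, (∀ r, R₀ < |r| → h r = 0) → HasCompactSupport h := by
    intro h hz
    apply HasCompactSupport.intro (isCompact_Icc (a := -(R₀+1)) (b := R₀+1))
    intro r hr
    simp only [Set.mem_Icc, not_and_or, not_le] at hr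
    apply hz
    rcases hr with h1 | h1 <;> rw [lt_abs] <;> [right; left] <;> linarith
  have intG2 : Integrable (fun r : ℝ => G r ^ 2) := by
    refine (hGc.pow 2).integrable_of_hasCompactSupport (hcs _ fun r hr => ?_)
    simp only [Pi.pow_apply, Pi.mul_apply, id]; rw [hsupp₀ r hr.le]; ring
  have intRd2 : Integrable (fun r : ℝ => r ^ 2 * deriv G r ^ 2) := by
    refine ((continuous_id.pow 2).mul (hG'.pow 2)).integrable_of_hasCompactSupport
      (hcs _ fun r hr => ?_)
    simp only [Pi.pow_apply, Pi.mul_apply, id]; rw [hd0 r hr]; ring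
  have intRGd : Integrable (fun r : ℝ => 2 * (r * (G r * deriv G r))) := by
    refine (continuous_const.mul (continuous_id.mul (hGc.mul hG'))).integrable_of_hasCompactSupport
      (hcs _ fun r hr => ?_)
    simp only [Pi.pow_apply, Pi.mul_apply, id]; rw [hd0 r hr]; ring
  have hIoi : ∀ h : ℝ → ℝ, Integrable h → (∀ r, R₀ < |r| → h r = 0) →
      ∫ r in Ioi (0:ℝ), h r = ∫ r in (0:ℝ)..R₀, h r := by
    intro h hint hz
    rw [intervalIntegral.integral_of_le hR₀.le, ← Ioc_union_Ioi_eq_Ioi hR₀.le,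
      setIntegral_union (Ioc_disjoint_Ioi le_rfl) measurableSet_Ioi hint.integrableOn
        hint.integrableOn]
    have : ∫ r in Ioi R₀, h r = 0 := by
      rw [setIntegral_congr_fun measurableSet_Ioi
        (fun r (hr : r ∈ Ioi R₀) => hz r (by rw [abs_of_pos (lt_trans hR₀ hr)]; exact hr))]
      simp
    rw [this, add_zero]
  set A := ∫ r in Ioi (0:ℝ), G r ^ 2 with hA
  set B := ∫ r in Ioi (0:ℝ), r ^ 2 * deriv G r ^ 2 with hB
  have hApos : 0 ≤ A := setIntegral_nonneg measurableSet_Ioi fun r _ => sq_nonneg _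
  have hBpos : 0 ≤ B := setIntegral_nonneg measurableSet_Ioi fun r _ =>
    mul_nonneg (sq_nonneg _) (sq_nonneg _)
  -- FTC identity
  have key : (∫ r in (0:ℝ)..R₀, (G r ^ 2 + 2 * (r * (G r * deriv G r)))) = 0 := by
    rw [intervalIntegral.integral_eq_sub_of_hasDerivAt (f := fun x : ℝ => x * G x ^ 2)]
    · rw [hsupp₀ R₀ (by rw [abs_of_pos hR₀])]; ring
    · intro r _
      have h1 : HasDerivAt (fun x => G x ^ 2) (2 * G r * deriv G r) r := by
        have := ((hGd r).hasDerivAt).pow 2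
        norm_num at this
        exact this
      have := (hasDerivAt_id r).mul h1
      convert this using 1
      · rfl
      · rfl
      · simp; ring
    · exact ((hGc.pow 2).add (continuous_const.mul
        (continuous_id.mul (hGc.mul hG')))).intervalIntegrable _ _
  have keyadd : (∫ r in (0:ℝ)..R₀, G r ^ 2) + (∫ r in (0:ℝ)..R₀, 2 * (r * (G r * deriv G r))) = 0 := by
    rw [← intervalIntegral.integral_add
      (Continuous.intervalIntegrable (by fun_prop) _ _)
      (Continuous.intervalIntegrable (u := fun r : ℝ => 2 * (r * (G r * deriv G r))) (by fun_prop) _ _)]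
    exact key
  have hAeq : A = ∫ r in (0:ℝ)..R₀, G r ^ 2 :=
    hIoi _ intG2 fun r hr => by rw [hsupp₀ r hr.le]; ring
  have hBeq : B = ∫ r in (0:ℝ)..R₀, r ^ 2 * deriv G r ^ 2 :=
    hIoi _ intRd2 fun r hr => by rw [hd0 r hr]; ring
  -- pointwise AM-GM and monotonicity
  have hmono : (∫ r in (0:ℝ)..R₀, -(2 * (r * (G r * deriv G r)))) ≤
      ∫ r in (0:ℝ)..R₀, (G r ^ 2 / 2 + 2 * (r ^ 2 * deriv G r ^ 2)) := by
    apply intervalIntegral.integral_mono_on hR₀.le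
      (Continuous.intervalIntegrable (u := fun r : ℝ => -(2 * (r * (G r * deriv G r)))) (by fun_prop) _ _)
      (Continuous.intervalIntegrable (u := fun r : ℝ => G r ^ 2 / 2 + 2 * (r ^ 2 * deriv G r ^ 2)) (by fun_prop) _ _)
    intro r _
    nlinarith [sq_nonneg (G r + 2 * (r * deriv G r))]
  have hAB : A ≤ A / 2 + 2 * B := by
    have h1 : A = ∫ r in (0:ℝ)..R₀, -(2 * (r * (G r * deriv G r))) := by
      rw [intervalIntegral.integral_neg]
      linarith [keyadd, hAeq]
    have h2 : (∫ r in (0:ℝ)..R₀, (G r ^ 2 / 2 + 2 * (r ^ 2 * deriv G r ^ 2))) = A / 2 + 2 * B := by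
      rw [intervalIntegral.integral_add
        (Continuous.intervalIntegrable (u := fun r : ℝ => G r ^ 2 / 2) (by fun_prop) _ _)
        (Continuous.intervalIntegrable (u := fun r : ℝ => 2 * (r ^ 2 * deriv G r ^ 2)) (by fun_prop) _ _),
        intervalIntegral.integral_div, intervalIntegral.integral_const_mul, ← hAeq, ← hBeq]
    linarith [hmono, h1, h2]
  have hfinal : A ≤ 4 * B := by linarith
  rw [← ofReal_integral_eq_lintegral_ofReal intG2.integrableOn
      (Filter.Eventually.of_forall fun r => sq_nonneg _),
    ← ofReal_integral_eq_lintegral_ofReal intRd2.integrableOn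
      (Filter.Eventually.of_forall fun r => mul_nonneg (sq_nonneg _) (sq_nonneg _))]
  calc ENNReal.ofReal A ≤ ENNReal.ofReal (4 * B) := ENNReal.ofReal_le_ofReal hfinal
    _ = 4 * ENNReal.ofReal B := by rw [ENNReal.ofReal_mul (by norm_num)]; norm_num

lemma fderiv_expand (f : Sp → ℝ) (x w : Sp) :
    fderiv ℝ f x w = ∑ a, w a * pd3 a f x := by
  have hw : w = ∑ a, w a • (Pi.single a (1:ℝ) : Sp) := by
    have h1 : ∀ a : Fin 3, w a • (Pi.single a (1:ℝ) : Sp) = Pi.single a (w a) := by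
      intro a
      rw [← Pi.single_smul]
      norm_num
    simp_rw [h1]
    exact (Finset.univ_sum_single w).symm
  calc fderiv ℝ f x w = fderiv ℝ f x (∑ a, w a • (Pi.single a (1:ℝ) : Sp)) := by rw [← hw]
    _ = ∑ a, w a * pd3 a f x := by
        rw [map_sum]
        exact Finset.sum_congr rfl fun a _ => by rw [_root_.map_smul]; rfl



lemma finrank_sp : Module.finrank ℝ Sp = 3 := by
  simp [Module.finrank_pi]

/-- Spherical coordinates transfer for lintegrals on ℝ³ (sup norm sphere). -/
lemma sph_transfer (h : Sp → ℝ) (hm : Measurable h) :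
    ∫⁻ x : Sp, ENNReal.ofReal (h x) =
      ∫⁻ ω : sphere (0:Sp) 1, ∫⁻ r in Ioi (0:ℝ),
        ENNReal.ofReal (r ^ 2 * h (r • (ω : Sp))) ∂volume
        ∂((volume : Measure Sp).toSphere) := by
  set μ : Measure Sp := volume with hμ
  set g : sphere (0:Sp) 1 × Ioi (0:ℝ) → ENNReal :=
    fun p => ENNReal.ofReal (h ((p.2 : ℝ) • (p.1 : Sp))) with hg
  have hgm : Measurable g := by
    apply Measurable.ennreal_ofReal
    exact hm.comp ((continuous_subtype_val.comp continuous_snd).smul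
      (continuous_subtype_val.comp continuous_fst)).measurable
  have step1 : (∫⁻ x : ({(0:Sp)}ᶜ : Set Sp), ENNReal.ofReal (h x) ∂(μ.comap Subtype.val))
      = ∫⁻ x : Sp, ENNReal.ofReal (h x) ∂μ := by
    have := lintegral_subtype_comap (μ := μ) (measurableSet_singleton (0:Sp)).compl
      (fun x => ENNReal.ofReal (h x))
    rw [restrict_compl_singleton] at this
    exact this
  have hdim : Module.finrank ℝ Sp - 1 = 2 := by rw [finrank_sp]
  have step2 : (∫⁻ x : ({(0:Sp)}ᶜ : Set Sp), ENNReal.ofReal (h x) ∂(μ.comap Subtype.val))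
      = ∫⁻ p, g p ∂(μ.toSphere.prod (Measure.volumeIoiPow 2)) := by
    rw [← hdim, ← (μ.measurePreserving_homeomorphUnitSphereProd).lintegral_comp hgm]
    apply lintegral_congr
    rintro ⟨x, hx⟩
    have hx0 : x ≠ 0 := hx
    have hnx : ‖x‖ ≠ 0 := norm_ne_zero_iff.mpr hx0
    simp only [hg, homeomorphUnitSphereProd_apply_fst_coe, homeomorphUnitSphereProd_apply_snd_coe]
    rw [smul_inv_smul₀ hnx]
  have step3 : ∫⁻ p, g p ∂(μ.toSphere.prod (Measure.volumeIoiPow 2))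
      = ∫⁻ ω : sphere (0:Sp) 1, ∫⁻ r : Ioi (0:ℝ), g (ω, r) ∂(Measure.volumeIoiPow 2)
          ∂μ.toSphere := lintegral_prod _ hgm.aemeasurable
  have step4 : ∀ ω : sphere (0:Sp) 1,
      (∫⁻ r : Ioi (0:ℝ), g (ω, r) ∂(Measure.volumeIoiPow 2))
        = ∫⁻ r in Ioi (0:ℝ), ENNReal.ofReal (r ^ 2 * h (r • (ω : Sp))) ∂volume := by
    intro ω
    rw [Measure.volumeIoiPow]
    rw [lintegral_withDensity_eq_lintegral_mul _
      ((measurable_subtype_coe.pow_const 2).ennreal_ofReal)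
      (show Measurable fun r : Ioi (0:ℝ) => g (ω, r) from hgm.comp measurable_prodMk_left)]
    calc (∫⁻ a : Ioi (0:ℝ), ((fun r : Ioi (0:ℝ) => ENNReal.ofReal ((r:ℝ)^2)) *
            (fun r : Ioi (0:ℝ) => g (ω, r))) a ∂(Measure.comap Subtype.val volume))
        = ∫⁻ a : Ioi (0:ℝ), (fun r : ℝ => ENNReal.ofReal (r ^ 2 * h (r • (ω : Sp)))) (a : ℝ)
            ∂(Measure.comap Subtype.val volume) := by
          apply lintegral_congr
          rintro ⟨r, hr⟩
          simp only [hg, Pi.mul_apply]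
          rw [← ENNReal.ofReal_mul (by positivity)]
      _ = ∫⁻ r in Ioi (0:ℝ), ENNReal.ofReal (r ^ 2 * h (r • (ω : Sp))) ∂volume :=
          lintegral_subtype_comap measurableSet_Ioi
            (fun r : ℝ => ENNReal.ofReal (r ^ 2 * h (r • (ω : Sp))))
  rw [← step1, step2, step3]
  exact lintegral_congr fun ω => step4 ω


lemma hardy (f : Sp → ℝ) (hf : ContDiff ℝ (⊤:ℕ∞) f) (hsupp : HasCompactSupport f) :
    ∫⁻ x : Sp, ENNReal.ofReal (f x ^ 2 / ‖x‖ ^ 2) ≤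
      12 * ∫⁻ x : Sp, ENNReal.ofReal (∑ a, pd3 a f x ^ 2) := by
  have hf1 : ContDiff ℝ 1 f := hf.of_le (by exact_mod_cast le_top)
  obtain ⟨R₁, hR₁⟩ := hsupp.isBounded.subset_closedBall 0
  have hR : ∀ x : Sp, R₁ + 1 ≤ ‖x‖ → f x = 0 := by
    intro x hx
    apply image_eq_zero_of_notMem_tsupport
    intro hmem
    have := mem_closedBall_zero_iff.mp (hR₁ hmem)
    linarith
  have hpd : ∀ a : Fin 3, Continuous (pd3 a f) := fun a =>
    (hf1.continuous_fderiv_apply one_ne_zero).comp (continuous_id.prodMk continuous_const)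
  set h₁ : Sp → ℝ := fun x => f x ^ 2 / ‖x‖ ^ 2 with hh₁
  set h₂ : Sp → ℝ := fun x => (∑ a, (‖x‖⁻¹ * x a) * pd3 a f x) ^ 2 with hh₂
  have m₁ : Measurable h₁ :=
    ((hf.continuous.pow 2).measurable).div ((continuous_norm.pow 2)).measurable
  have m₂ : Measurable h₂ := by
    apply Measurable.pow_const
    apply Finset.measurable_sum
    intro a _
    exact (measurable_norm.inv.mul (measurable_pi_apply a)).mul (hpd a).measurable
  -- per-ray facts
  have hray : ∀ ω : sphere (0:Sp) 1,
      (∫⁻ r in Ioi (0:ℝ), ENNReal.ofReal (r ^ 2 * h₁ (r • (ω:Sp))) ∂volume) ≤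
        4 * ∫⁻ r in Ioi (0:ℝ), ENNReal.ofReal (r ^ 2 * h₂ (r • (ω:Sp))) ∂volume := by
    intro ω
    have hω : ‖(ω:Sp)‖ = 1 := mem_sphere_zero_iff_norm.mp ω.2
    set G : ℝ → ℝ := fun r => f (r • (ω:Sp)) with hG
    have hGc : ContDiff ℝ 1 G :=
      hf1.comp ((contDiff_id.smul contDiff_const))
    have hGsupp : ∀ r : ℝ, R₁ + 1 ≤ |r| → G r = 0 := by
      intro r hr
      apply hR
      rw [norm_smul, hω, mul_one]
      exact hr
    have hGderiv : ∀ r : ℝ, deriv G r = fderiv ℝ f (r • (ω:Sp)) (ω:Sp) := by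
      intro r
      have h1 : HasDerivAt (fun s : ℝ => s • (ω:Sp)) (ω:Sp) r := by
        simpa using (hasDerivAt_id r).smul_const (ω:Sp)
      exact ((hf1.differentiable one_ne_zero (r • (ω:Sp))).hasFDerivAt.comp_hasDerivAt r h1).deriv
    have e₁ : (∫⁻ r in Ioi (0:ℝ), ENNReal.ofReal (r ^ 2 * h₁ (r • (ω:Sp))) ∂volume)
        = ∫⁻ r in Ioi (0:ℝ), ENNReal.ofReal (G r ^ 2) ∂volume := by
      apply setLIntegral_congr_fun measurableSet_Ioi
      intro r hr
      have hr0 : (0:ℝ) < r := hr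
      have : ‖r • (ω:Sp)‖ = r := by
        rw [norm_smul, hω, mul_one, Real.norm_eq_abs, abs_of_pos hr0]
      simp only [hh₁, this]
      congr 1
      field_simp
      rfl
    have e₂ : (∫⁻ r in Ioi (0:ℝ), ENNReal.ofReal (r ^ 2 * deriv G r ^ 2) ∂volume)
        = ∫⁻ r in Ioi (0:ℝ), ENNReal.ofReal (r ^ 2 * h₂ (r • (ω:Sp))) ∂volume := by
      apply setLIntegral_congr_fun measurableSet_Ioi
      intro r hr
      have hr0 : (0:ℝ) < r := hr
      have hnrm : ‖r • (ω:Sp)‖ = r := by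
        rw [norm_smul, hω, mul_one, Real.norm_eq_abs, abs_of_pos hr0]
      have hcoef : ∀ a : Fin 3, ‖r • (ω:Sp)‖⁻¹ * (r • (ω:Sp)) a = (ω:Sp) a := by
        intro a
        rw [hnrm]
        simp only [Pi.smul_apply, smul_eq_mul]
        field_simp
      have hsum : (∑ a, (‖r • (ω:Sp)‖⁻¹ * (r • (ω:Sp)) a) * pd3 a f (r • (ω:Sp)))
          = ∑ a, (ω:Sp) a * pd3 a f (r • (ω:Sp)) :=
        Finset.sum_congr rfl fun a _ => by rw [hcoef a]
      simp only [hh₂]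
      rw [hGderiv r, fderiv_expand f (r • (ω:Sp)) (ω:Sp), hsum]
    rw [e₁, ← e₂]
    exact ray_hardy G hGc (R₁ + 1) hGsupp
  have hpt : ∀ x : Sp, h₂ x ≤ 3 * ∑ a, pd3 a f x ^ 2 := by
    intro x
    have hcs := Finset.sum_mul_sq_le_sq_mul_sq Finset.univ
      (fun a : Fin 3 => ‖x‖⁻¹ * x a) (fun a => pd3 a f x)
    have hc3 : (∑ a : Fin 3, (‖x‖⁻¹ * x a) ^ 2) ≤ 3 := by
      have hterm : ∀ a : Fin 3, (‖x‖⁻¹ * x a) ^ 2 ≤ 1 := by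
        intro a
        by_cases hx : x = 0
        · subst hx; simp
        · rw [sq_le_one_iff_abs_le_one, abs_mul, abs_inv, abs_norm]
          have h1 : |x a| ≤ ‖x‖ := by
            rw [← Real.norm_eq_abs]; exact norm_le_pi_norm x a
          have h2 : (0:ℝ) < ‖x‖ := norm_pos_iff.mpr hx
          rw [inv_mul_le_iff₀ h2]
          linarith
      calc (∑ a : Fin 3, (‖x‖⁻¹ * x a) ^ 2) ≤ ∑ _a : Fin 3, (1:ℝ) :=
            Finset.sum_le_sum fun a _ => hterm a
        _ = 3 := by simp
    calc h₂ x ≤ (∑ a : Fin 3, (‖x‖⁻¹ * x a) ^ 2) * (∑ a, pd3 a f x ^ 2) := hcs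
      _ ≤ 3 * ∑ a, pd3 a f x ^ 2 := by
          apply mul_le_mul_of_nonneg_right hc3
          exact Finset.sum_nonneg fun a _ => sq_nonneg _
  calc ∫⁻ x : Sp, ENNReal.ofReal (h₁ x)
      = ∫⁻ ω : sphere (0:Sp) 1, ∫⁻ r in Ioi (0:ℝ),
          ENNReal.ofReal (r ^ 2 * h₁ (r • (ω:Sp))) ∂volume ∂((volume : Measure Sp).toSphere) :=
        sph_transfer h₁ m₁
    _ ≤ ∫⁻ ω : sphere (0:Sp) 1, 4 * ∫⁻ r in Ioi (0:ℝ),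
          ENNReal.ofReal (r ^ 2 * h₂ (r • (ω:Sp))) ∂volume ∂((volume : Measure Sp).toSphere) :=
        lintegral_mono fun ω => hray ω
    _ = 4 * ∫⁻ ω : sphere (0:Sp) 1, ∫⁻ r in Ioi (0:ℝ),
          ENNReal.ofReal (r ^ 2 * h₂ (r • (ω:Sp))) ∂volume ∂((volume : Measure Sp).toSphere) :=
        lintegral_const_mul' 4 _ (by norm_num)
    _ = 4 * ∫⁻ x : Sp, ENNReal.ofReal (h₂ x) := by rw [← sph_transfer h₂ m₂]
    _ ≤ 4 * ∫⁻ x : Sp, ENNReal.ofReal (3 * ∑ a, pd3 a f x ^ 2) := by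
        gcongr 4 * ?_
        exact lintegral_mono fun x => ENNReal.ofReal_le_ofReal (hpt x)
    _ = 12 * ∫⁻ x : Sp, ENNReal.ofReal (∑ a, pd3 a f x ^ 2) := by
        simp_rw [ENNReal.ofReal_mul (by norm_num : (0:ℝ) ≤ 3)]
        rw [lintegral_const_mul' _ _ (by norm_num : ENNReal.ofReal 3 ≠ ⊤), ← mul_assoc]
        norm_num

/-- interpolated Hardy inequality. -/
theorem stmt_13 :
    ∃ C : ℝ, 0 < C ∧ ∀ δ : ℝ, 0 < δ → δ < 1 →
      ∀ f : Sp → ℝ, ContDiff ℝ (⊤ : ℕ∞) f → HasCompactSupport f →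
        L2norm (fun x => (rnorm x) ^ (-δ) * f x) ≤
          C * (L2norm (fun x => gradNorm f x)) ^ δ * (L2norm f) ^ (1 - δ) := by
  refine ⟨4, by norm_num, ?_⟩
  intro δ hδ0 hδ1 f hf hsupp
  have hf1 : ContDiff ℝ 1 f := hf.of_le (by exact_mod_cast le_top)
  have hcf : Continuous f := hf.continuous
  have hpd : ∀ a : Fin 3, Continuous (pd3 a f) := fun a =>
    (hf1.continuous_fderiv_apply one_ne_zero).comp (continuous_id.prodMk continuous_const)
  have hrncont : Continuous rnorm :=
    Real.continuous_sqrt.comp (continuous_finset_sum _ fun a _ => (continuous_apply a).pow 2)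
  set J : ℝ≥0∞ := ∫⁻ x : Sp, ENNReal.ofReal (f x ^ 2) with hJdef
  set D : ℝ≥0∞ := ∫⁻ x : Sp, ENNReal.ofReal (∑ a, pd3 a f x ^ 2) with hDdef
  set K : ℝ≥0∞ := ∫⁻ x : Sp, ENNReal.ofReal (f x ^ 2 / ‖x‖ ^ 2) with hKdef
  -- integrability and finiteness
  have hfsq_int : Integrable (fun x : Sp => f x ^ 2) := by
    have h2 : HasCompactSupport (fun x : Sp => f x ^ 2) :=
      hsupp.comp_left (g := fun t : ℝ => t ^ 2) (by norm_num)
    exact (hcf.pow 2).integrable_of_hasCompactSupport h2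
  have hpdsupp : ∀ a : Fin 3, HasCompactSupport (pd3 a f) := fun a =>
    (hsupp.fderiv ℝ).comp_left (g := fun L : Sp →L[ℝ] ℝ => L (Pi.single a 1)) (by simp)
  have hDint : Integrable (fun x : Sp => ∑ a, pd3 a f x ^ 2) := by
    apply integrable_finset_sum
    intro a _
    have h2 : HasCompactSupport (fun x : Sp => pd3 a f x ^ 2) :=
      (hpdsupp a).comp_left (g := fun t : ℝ => t ^ 2) (by norm_num)
    exact ((hpd a).pow 2).integrable_of_hasCompactSupport h2
  have hJeq : ENNReal.ofReal (∫ x : Sp, f x ^ 2) = J :=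
    ofReal_integral_eq_lintegral_ofReal hfsq_int (Filter.Eventually.of_forall fun x => sq_nonneg _)
  have hDeq : ENNReal.ofReal (∫ x : Sp, ∑ a, pd3 a f x ^ 2) = D :=
    ofReal_integral_eq_lintegral_ofReal hDint (Filter.Eventually.of_forall fun x =>
      Finset.sum_nonneg fun a _ => sq_nonneg _)
  have hJfin : J ≠ ⊤ := by rw [← hJeq]; exact ENNReal.ofReal_ne_top
  have hDfin : D ≠ ⊤ := by rw [← hDeq]; exact ENNReal.ofReal_ne_top
  have hKD : K ≤ 12 * D := hardy f hf hsupp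
  -- a.e. nonzero
  have h0 : ∀ᵐ x : Sp ∂volume, x ≠ 0 := by
    have hs : {x : Sp | ¬ x ≠ 0} = {0} := by ext y; simp
    rw [ae_iff, hs]
    exact measure_singleton 0
  set T : ℝ≥0∞ := ∫⁻ x : Sp, ENNReal.ofReal ((rnorm x ^ (-δ) * f x) ^ 2) with hTdef
  -- pointwise bound
  have hptwise : ∀ x : Sp, x ≠ 0 →
      ENNReal.ofReal ((rnorm x ^ (-δ) * f x) ^ 2) ≤
        ENNReal.ofReal (f x ^ 2 / ‖x‖ ^ 2) ^ δ * ENNReal.ofReal (f x ^ 2) ^ (1 - δ) := by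
    intro x hx
    have hb : (0:ℝ) < ‖x‖ := norm_pos_iff.mpr hx
    have hrn : ‖x‖ ≤ rnorm x := by
      unfold rnorm
      rw [pi_norm_le_iff_of_nonneg (Real.sqrt_nonneg _)]
      intro a
      rw [Real.norm_eq_abs, ← Real.sqrt_sq_eq_abs]
      exact Real.sqrt_le_sqrt (Finset.single_le_sum (fun b _ => sq_nonneg (x b)) (Finset.mem_univ a))
    have ha : (0:ℝ) < rnorm x := lt_of_lt_of_le hb hrn
    set F := f x ^ 2 with hF
    have hFnn : (0:ℝ) ≤ F := sq_nonneg _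
    -- real inequality
    have hreal : (rnorm x ^ (-δ) * f x) ^ 2 ≤ (F / ‖x‖ ^ 2) ^ δ * F ^ (1 - δ) := by
      have h1 : (rnorm x ^ (-δ) * f x) ^ 2 = rnorm x ^ (-(2*δ)) * F := by
        rw [mul_pow, ← Real.rpow_natCast (rnorm x ^ (-δ)) 2, ← Real.rpow_mul ha.le,
          show (-δ) * ((2:ℕ):ℝ) = -(2*δ) by push_cast; ring]
      have h2 : rnorm x ^ (-(2*δ)) ≤ ‖x‖ ^ (-(2*δ)) := by
        rw [Real.rpow_neg ha.le, Real.rpow_neg hb.le]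
        apply inv_anti₀ (Real.rpow_pos_of_pos hb _)
        exact Real.rpow_le_rpow hb.le hrn (by positivity)
      have h3 : (F / ‖x‖ ^ 2) ^ δ * F ^ (1 - δ) = ‖x‖ ^ (-(2*δ)) * F := by
        rcases eq_or_lt_of_le hFnn with hF0 | hFpos
        · rw [← hF0]
          rw [zero_div, Real.zero_rpow hδ0.ne', Real.zero_rpow (by linarith), mul_zero, mul_zero]
        · rw [Real.div_rpow hFnn (sq_nonneg _), ← Real.rpow_natCast ‖x‖ 2,
            ← Real.rpow_mul hb.le, div_mul_eq_mul_div, ← Real.rpow_add hFpos,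
            show δ + (1 - δ) = 1 by ring, Real.rpow_one,
            show ((2:ℕ):ℝ) * δ = 2*δ by push_cast; ring,
            Real.rpow_neg hb.le, div_eq_mul_inv, mul_comm]
      calc (rnorm x ^ (-δ) * f x) ^ 2 = rnorm x ^ (-(2*δ)) * F := h1
        _ ≤ ‖x‖ ^ (-(2*δ)) * F := mul_le_mul_of_nonneg_right h2 hFnn
        _ = (F / ‖x‖ ^ 2) ^ δ * F ^ (1 - δ) := h3.symm
    calc ENNReal.ofReal ((rnorm x ^ (-δ) * f x) ^ 2)
        ≤ ENNReal.ofReal ((F / ‖x‖ ^ 2) ^ δ * F ^ (1 - δ)) := ENNReal.ofReal_le_ofReal hreal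
      _ = ENNReal.ofReal (F / ‖x‖ ^ 2) ^ δ * ENNReal.ofReal F ^ (1 - δ) := by
          rw [ENNReal.ofReal_mul (by positivity),
            ENNReal.ofReal_rpow_of_nonneg (by positivity) hδ0.le,
            ENNReal.ofReal_rpow_of_nonneg hFnn (by linarith)]
  -- Hölder
  have hAmeas : Measurable (fun x : Sp => ENNReal.ofReal (f x ^ 2 / ‖x‖ ^ 2)) :=
    (((hcf.pow 2).measurable).div ((continuous_norm.pow 2)).measurable).ennreal_ofReal
  have hBmeas : Measurable (fun x : Sp => ENNReal.ofReal (f x ^ 2)) :=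
    ((hcf.pow 2).measurable).ennreal_ofReal
  have hHolder : T ≤ K ^ δ * J ^ (1 - δ) := by
    have hconj : (1/δ).HolderConjugate (1/(1-δ)) := by
      constructor
      · rw [one_div, one_div, inv_inv, inv_inv]; ring
      · exact one_div_pos.mpr hδ0
      · exact one_div_pos.mpr (by linarith)
    have hH := ENNReal.lintegral_mul_le_Lp_mul_Lq (volume : Measure Sp) hconj
      (f := fun x => ENNReal.ofReal (f x ^ 2 / ‖x‖ ^ 2) ^ δ)
      (g := fun x => ENNReal.ofReal (f x ^ 2) ^ (1 - δ))
      (hAmeas.pow_const δ).aemeasurable (hBmeas.pow_const (1-δ)).aemeasurable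
    have e1 : (∫⁻ x : Sp, (ENNReal.ofReal (f x ^ 2 / ‖x‖ ^ 2) ^ δ) ^ (1/δ)) = K := by
      apply lintegral_congr
      intro x
      rw [← ENNReal.rpow_mul, mul_one_div_cancel hδ0.ne', ENNReal.rpow_one]
    have e2 : (∫⁻ x : Sp, (ENNReal.ofReal (f x ^ 2) ^ (1-δ)) ^ (1/(1-δ))) = J := by
      apply lintegral_congr
      intro x
      rw [← ENNReal.rpow_mul, mul_one_div_cancel (by linarith : 1 - δ ≠ 0), ENNReal.rpow_one]
    calc T ≤ ∫⁻ x : Sp, ENNReal.ofReal (f x ^ 2 / ‖x‖ ^ 2) ^ δ * ENNReal.ofReal (f x ^ 2) ^ (1 - δ) := by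
          apply lintegral_mono_ae
          filter_upwards [h0] with x hx
          exact hptwise x hx
      _ ≤ (∫⁻ x : Sp, (ENNReal.ofReal (f x ^ 2 / ‖x‖ ^ 2) ^ δ) ^ (1/δ)) ^ (1/(1/δ)) *
            (∫⁻ x : Sp, (ENNReal.ofReal (f x ^ 2) ^ (1-δ)) ^ (1/(1-δ))) ^ (1/(1/(1-δ))) := hH
      _ = K ^ δ * J ^ (1 - δ) := by rw [e1, e2, one_div_one_div, one_div_one_div]
  have hTbound : T ≤ (12 * D) ^ δ * J ^ (1 - δ) := by
    refine le_trans hHolder (mul_le_mul_of_nonneg_right ?_ zero_le)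
    exact ENNReal.rpow_le_rpow hKD hδ0.le
  have hRHSfin : (12 * D) ^ δ * J ^ (1 - δ) ≠ ⊤ := by
    apply ENNReal.mul_ne_top
    · exact ENNReal.rpow_ne_top_of_nonneg hδ0.le (ENNReal.mul_ne_top (by norm_num) hDfin)
    · exact ENNReal.rpow_ne_top_of_nonneg (by linarith) hJfin
  -- conversions to real
  have hL2f : L2norm f = J.toReal ^ (1/2 : ℝ) := by
    rw [L2norm, integral_eq_lintegral_of_nonneg_ae (Filter.Eventually.of_forall fun x => sq_nonneg _)
      ((hcf.pow 2).aestronglyMeasurable)]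
  have hL2g : L2norm (fun x => gradNorm f x) = D.toReal ^ (1/2 : ℝ) := by
    rw [L2norm]
    have : ∀ x : Sp, gradNorm f x ^ 2 = ∑ a, pd3 a f x ^ 2 := fun x =>
      Real.sq_sqrt (Finset.sum_nonneg fun a _ => sq_nonneg _)
    simp_rw [this]
    rw [integral_eq_lintegral_of_nonneg_ae (Filter.Eventually.of_forall fun x =>
      Finset.sum_nonneg fun a _ => sq_nonneg _)
      ((continuous_finset_sum _ fun a _ => (hpd a).pow 2).aestronglyMeasurable)]
  have hL2T : L2norm (fun x => rnorm x ^ (-δ) * f x) = T.toReal ^ (1/2 : ℝ) := by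
    rw [L2norm, integral_eq_lintegral_of_nonneg_ae (Filter.Eventually.of_forall fun x => sq_nonneg _)]
    apply AEMeasurable.aestronglyMeasurable
    exact ((hrncont.measurable.pow measurable_const).mul hcf.measurable).pow_const 2 |>.aemeasurable
  rw [hL2f, hL2g, hL2T]
  -- real-number endgame
  set Dr := D.toReal with hDr
  set Jr := J.toReal with hJr
  have hDrnn : 0 ≤ Dr := ENNReal.toReal_nonneg
  have hJrnn : 0 ≤ Jr := ENNReal.toReal_nonneg
  have hTr : T.toReal ≤ (12 * Dr) ^ δ * Jr ^ (1 - δ) := by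
    have := ENNReal.toReal_mono hRHSfin hTbound
    rwa [ENNReal.toReal_mul, ← ENNReal.toReal_rpow, ← ENNReal.toReal_rpow,
      ENNReal.toReal_mul, ENNReal.toReal_ofNat] at this
  calc T.toReal ^ (1/2:ℝ) ≤ ((12 * Dr) ^ δ * Jr ^ (1 - δ)) ^ (1/2:ℝ) :=
        Real.rpow_le_rpow ENNReal.toReal_nonneg hTr (by norm_num)
    _ = (12:ℝ) ^ (δ/2) * Dr ^ (δ/2) * Jr ^ ((1-δ)/2) := by
        rw [Real.mul_rpow (by positivity) (by positivity),
          Real.mul_rpow (by norm_num) hDrnn,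
          Real.mul_rpow (by positivity) (by positivity),
          ← Real.rpow_mul (by norm_num : (0:ℝ) ≤ 12),
          ← Real.rpow_mul hDrnn, ← Real.rpow_mul hJrnn,
          show δ * (1/2:ℝ) = δ/2 by ring,
          show (1-δ) * (1/2:ℝ) = (1-δ)/2 by ring]
    _ ≤ 4 * (Dr ^ (1/2:ℝ)) ^ δ * (Jr ^ (1/2:ℝ)) ^ (1 - δ) := by
        rw [← Real.rpow_mul hDrnn, ← Real.rpow_mul hJrnn,
          show (1/2:ℝ) * δ = δ/2 by ring,
          show (1/2:ℝ) * (1-δ) = (1-δ)/2 by ring]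
        have h12 : (12:ℝ) ^ (δ/2) ≤ 4 := by
          calc (12:ℝ) ^ (δ/2) ≤ (12:ℝ) ^ ((1:ℝ)/2) :=
                Real.rpow_le_rpow_of_exponent_le (by norm_num) (by linarith)
            _ ≤ 4 := by
                rw [← Real.sqrt_eq_rpow]
                rw [show (4:ℝ) = Real.sqrt 16 by
                  rw [show (16:ℝ) = 4^2 by norm_num, Real.sqrt_sq (by norm_num)]]
                exact Real.sqrt_le_sqrt (by norm_num)
        gcongr
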